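/- arXiv:2602.21846 — 2 statements merged into one kernel-verified Lean document; each statement's English description precedes it below -/
import Mathlib

section
/- Fix N ∈ ℕ and points 0 < x₁ < x₂ < ⋯ < x_N. The N × N Gram matrix K with entries K_{ij} = min(x_i, x_j) is invertible, and its inverse is the symmetric tridiagonal matrix with diagonal entries b_i = (x_{i+1} − x_{i−1}) / ((x_i − x_{i−1})(x_{i+1} − x_i)) for 1 ≤ i ≤ N−1 (with the convention x₀ = 0), b_N = 1/(x_N − x_{N−1}), and off-diagonal entries c_i = −1/(x_{i+1} − x_i) on the first sub- and super-diagonal. -/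
open Matrix

lemma sum_one' {N : ℕ} (f : Fin N → ℝ) (a : Fin N)
    (h : ∀ k, k ≠ a → f k = 0) : ∑ k, f k = f a :=
  Finset.sum_eq_single_of_mem a (Finset.mem_univ a) (fun k _ hk => h k hk)

lemma sum_two' {N : ℕ} (f : Fin N → ℝ) (a b : Fin N) (hab : a ≠ b)
    (h : ∀ k, k ≠ a → k ≠ b → f k = 0) : ∑ k, f k = f a + f b := by
  have hs : ∑ k ∈ ({a, b} : Finset (Fin N)), f k = ∑ k, f k :=
    Finset.sum_subset (Finset.subset_univ _) (by
      intro k _ hk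
      simp only [Finset.mem_insert, Finset.mem_singleton, not_or] at hk
      exact h k hk.1 hk.2)
  rw [← hs, Finset.sum_pair hab]

lemma sum_three' {N : ℕ} (f : Fin N → ℝ) (a b c : Fin N)
    (hab : a ≠ b) (hac : a ≠ c) (hbc : b ≠ c)
    (h : ∀ k, k ≠ a → k ≠ b → k ≠ c → f k = 0) : ∑ k, f k = f a + f b + f c := by
  have hs : ∑ k ∈ ({a, b, c} : Finset (Fin N)), f k = ∑ k, f k :=
    Finset.sum_subset (Finset.subset_univ _) (by
      intro k _ hk
      simp only [Finset.mem_insert, Finset.mem_singleton, not_or] at hk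
      exact h k hk.1 hk.2.1 hk.2.2)
  rw [← hs]
  rw [show ({a,b,c} : Finset (Fin N)) = insert a {b,c} from rfl,
    Finset.sum_insert (by simp [hab, hac]), Finset.sum_pair hbc]
  ring

lemma mono_lt' (x : ℕ → ℝ) (N : ℕ) (hmono : ∀ i, i < N → x i < x (i + 1)) :
    ∀ a b, a < b → b ≤ N → x a < x b := by
  intro a b hab hbN
  induction b with
  | zero => omega
  | succ n ih =>
    rcases Nat.lt_or_ge a n with h | h
    · exact (ih h (by omega)).trans (hmono n (by omega))
    · have : a = n := by omega
      subst this; exact hmono a (by omega)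

lemma mono_le' (x : ℕ → ℝ) (N : ℕ) (hmono : ∀ i, i < N → x i < x (i + 1)) :
    ∀ a b, a ≤ b → b ≤ N → x a ≤ x b := by
  intro a b hab hbN
  rcases Nat.eq_or_lt_of_le hab with h | h
  · rw [h]
  · exact (mono_lt' x N hmono a b h hbN).le

lemma BK_eq_one (N : ℕ) (hN : 0 < N) (x : ℕ → ℝ)
    (hx0 : x 0 = 0)
    (hmono : ∀ i, i < N → x i < x (i + 1))
    (K B : Matrix (Fin N) (Fin N) ℝ)
    (hK : ∀ i j : Fin N, K i j = min (x ((i : ℕ) + 1)) (x ((j : ℕ) + 1)))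
    (hB : ∀ i j : Fin N,
      B i j =
        if (i : ℕ) = (j : ℕ) then
          (if (i : ℕ) + 1 = N then 1 / (x N - x (N - 1))
           else (x ((i : ℕ) + 2) - x (i : ℕ)) /
             ((x ((i : ℕ) + 1) - x (i : ℕ)) * (x ((i : ℕ) + 2) - x ((i : ℕ) + 1))))
        else if (i : ℕ) + 1 = (j : ℕ) then -(1 / (x ((i : ℕ) + 2) - x ((i : ℕ) + 1)))
        else if (j : ℕ) + 1 = (i : ℕ) then -(1 / (x ((j : ℕ) + 2) - x ((j : ℕ) + 1)))
        else 0) :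
    B * K = 1 := by
  have hlt : ∀ a b, a < b → b ≤ N → x a < x b := mono_lt' x N hmono
  have hle : ∀ a b, a ≤ b → b ≤ N → x a ≤ x b := mono_le' x N hmono
  ext i j
  rw [Matrix.mul_apply, Matrix.one_apply]
  have hiN : (i : ℕ) < N := i.isLt
  have hjN : (j : ℕ) < N := j.isLt
  by_cases h0 : (i : ℕ) = 0
  · by_cases hL : (i : ℕ) + 1 = N
    · -- N = 1
      have hij : i = j := Fin.ext (by omega)
      rw [if_pos hij]
      rw [sum_one' _ i (fun k hk => absurd (Fin.ext (by omega : (k:ℕ) = (i:ℕ))) hk)]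
      rw [hB, hK, if_pos rfl, if_pos hL,
        show (i:ℕ) + 1 = N from hL, show (j:ℕ) + 1 = N by omega,
        show N - 1 = 0 by omega, hx0, min_self]
      have hxN : 0 < x N := by
        have := hlt 0 N (by omega) le_rfl; rwa [hx0] at this
      field_simp
      simp [hxN.ne']
    · -- i = 0, i+1 < N : two terms i and c := i+1
      set c : Fin N := ⟨(i:ℕ) + 1, by omega⟩ with hc
      have hcv : (c : ℕ) = (i:ℕ) + 1 := rfl
      rw [sum_two' _ i c (by rintro h; rw [h] at hcv; omega)
        (fun k hki hkc => by
          have h1 : (k:ℕ) ≠ (i:ℕ) := fun h => hki (Fin.ext h)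
          have h2 : (k:ℕ) ≠ (i:ℕ) + 1 := fun h => hkc (Fin.ext (by rw [hcv]; exact h))
          rw [hB, if_neg (by omega), if_neg (by omega), if_neg (by omega), zero_mul])]
      have hBi : B i i = (x ((i:ℕ)+2) - x (i:ℕ)) /
          ((x ((i:ℕ)+1) - x (i:ℕ)) * (x ((i:ℕ)+2) - x ((i:ℕ)+1))) := by
        rw [hB, if_pos rfl, if_neg hL]
      have hBc : B i c = -(1 / (x ((i:ℕ)+2) - x ((i:ℕ)+1))) := by
        rw [hB, if_neg (by omega), if_pos (by omega)]
      have hKc : K c j = min (x ((i:ℕ)+2)) (x ((j:ℕ)+1)) := by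
        rw [hK, show (c:ℕ)+1 = (i:ℕ)+2 by omega]
      rw [hBi, hBc, hK i j, hKc, h0, hx0]
      have d1 : 0 < x 1 := by have := hlt 0 1 one_pos (by omega); rwa [hx0] at this
      have d2 : x 1 < x 2 := hmono 1 (by omega)
      have e1 : x 1 ≠ 0 := ne_of_gt d1
      have e2 : x 2 - x 1 ≠ 0 := sub_ne_zero_of_ne d2.ne'
      rcases Nat.eq_or_lt_of_le (Nat.zero_le (j:ℕ)) with hj | hj
      · have hij : i = j := Fin.ext (by omega)
        rw [if_pos hij, show (j:ℕ) + 1 = 1 by omega, min_self,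
          min_eq_right (hle 1 2 (by omega) (by omega))]
        field_simp
        ring
      · have hne : i ≠ j := by rintro rfl; omega
        rw [if_neg hne,
          min_eq_left (hle 1 ((j:ℕ)+1) (by omega) (by omega)),
          min_eq_left (hle 2 ((j:ℕ)+1) (by omega) (by omega))]
        field_simp
        ring
  · by_cases hL : (i : ℕ) + 1 = N
    · -- 0 < i, i+1 = N : two terms a := i-1 and i
      set a : Fin N := ⟨(i:ℕ) - 1, by omega⟩ with ha
      have hav : (a : ℕ) = (i:ℕ) - 1 := rfl
      rw [sum_two' _ a i (by rintro h; rw [h] at hav; omega)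
        (fun k hka hki => by
          have h1 : (k:ℕ) ≠ (i:ℕ) - 1 := fun h => hka (Fin.ext (by rw [hav]; exact h))
          have h2 : (k:ℕ) ≠ (i:ℕ) := fun h => hki (Fin.ext h)
          rw [hB, if_neg (by omega), if_neg (by omega), if_neg (by omega), zero_mul])]
      have hBa : B i a = -(1 / (x ((i:ℕ)+1) - x (i:ℕ))) := by
        rw [hB, if_neg (by omega), if_neg (by omega), if_pos (by omega),
          show (a:ℕ)+2 = (i:ℕ)+1 by omega, show (a:ℕ)+1 = (i:ℕ) by omega]
      have hBi : B i i = 1 / (x ((i:ℕ)+1) - x (i:ℕ)) := by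
        rw [hB, if_pos rfl, if_pos hL, show x N = x ((i:ℕ)+1) by congr 1; omega,
          show x (N-1) = x (i:ℕ) by congr 1; omega]
      have hKa : K a j = min (x (i:ℕ)) (x ((j:ℕ)+1)) := by
        rw [hK, show (a:ℕ)+1 = (i:ℕ) by omega]
      rw [hBa, hBi, hKa, hK i j]
      have d1 : x (i:ℕ) < x ((i:ℕ)+1) := hmono _ (by omega)
      have e1 : x ((i:ℕ)+1) - x (i:ℕ) ≠ 0 := sub_ne_zero_of_ne d1.ne'
      rcases lt_trichotomy (j:ℕ) (i:ℕ) with hj | hj | hj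
      · have hne : i ≠ j := by rintro rfl; omega
        rw [if_neg hne,
          min_eq_right (hle ((j:ℕ)+1) (i:ℕ) (by omega) (by omega)),
          min_eq_right (hle ((j:ℕ)+1) ((i:ℕ)+1) (by omega) (by omega))]
        field_simp
        ring
      · have hij : i = j := Fin.ext (by omega)
        rw [if_pos hij, show (j:ℕ)+1 = (i:ℕ)+1 by omega, min_self,
          min_eq_left d1.le]
        field_simp
        ring
      · omega
    · -- interior: 0 < i, i+1 < N : three terms
      set a : Fin N := ⟨(i:ℕ) - 1, by omega⟩ with ha
      set c : Fin N := ⟨(i:ℕ) + 1, by omega⟩ with hc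
      have hav : (a : ℕ) = (i:ℕ) - 1 := rfl
      have hcv : (c : ℕ) = (i:ℕ) + 1 := rfl
      rw [sum_three' _ a i c (by rintro h; rw [h] at hav; omega)
        (by rintro h; rw [h] at hav; omega) (by rintro h; rw [← h] at hcv; omega)
        (fun k hka hki hkc => by
          have h1 : (k:ℕ) ≠ (i:ℕ) - 1 := fun h => hka (Fin.ext (by rw [hav]; exact h))
          have h2 : (k:ℕ) ≠ (i:ℕ) := fun h => hki (Fin.ext h)
          have h3 : (k:ℕ) ≠ (i:ℕ) + 1 := fun h => hkc (Fin.ext (by rw [hcv]; exact h))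
          rw [hB, if_neg (by omega), if_neg (by omega), if_neg (by omega), zero_mul])]
      have hBa : B i a = -(1 / (x ((i:ℕ)+1) - x (i:ℕ))) := by
        rw [hB, if_neg (by omega), if_neg (by omega), if_pos (by omega),
          show (a:ℕ)+2 = (i:ℕ)+1 by omega, show (a:ℕ)+1 = (i:ℕ) by omega]
      have hBi : B i i = (x ((i:ℕ)+2) - x (i:ℕ)) /
          ((x ((i:ℕ)+1) - x (i:ℕ)) * (x ((i:ℕ)+2) - x ((i:ℕ)+1))) := by
        rw [hB, if_pos rfl, if_neg hL]
      have hBc : B i c = -(1 / (x ((i:ℕ)+2) - x ((i:ℕ)+1))) := by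
        rw [hB, if_neg (by omega), if_pos (by omega)]
      have hKa : K a j = min (x (i:ℕ)) (x ((j:ℕ)+1)) := by
        rw [hK, show (a:ℕ)+1 = (i:ℕ) by omega]
      have hKc : K c j = min (x ((i:ℕ)+2)) (x ((j:ℕ)+1)) := by
        rw [hK, show (c:ℕ)+1 = (i:ℕ)+2 by omega]
      rw [hBa, hBi, hBc, hKa, hK i j, hKc]
      have d1 : x (i:ℕ) < x ((i:ℕ)+1) := hmono _ (by omega)
      have d2 : x ((i:ℕ)+1) < x ((i:ℕ)+2) := hmono _ (by omega)
      have e1 : x ((i:ℕ)+1) - x (i:ℕ) ≠ 0 := sub_ne_zero_of_ne d1.ne'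
      have e2 : x ((i:ℕ)+2) - x ((i:ℕ)+1) ≠ 0 := sub_ne_zero_of_ne d2.ne'
      rcases lt_trichotomy (j:ℕ) (i:ℕ) with hj | hj | hj
      · have hne : i ≠ j := by rintro rfl; omega
        rw [if_neg hne,
          min_eq_right (hle ((j:ℕ)+1) (i:ℕ) (by omega) (by omega)),
          min_eq_right (hle ((j:ℕ)+1) ((i:ℕ)+1) (by omega) (by omega)),
          min_eq_right (hle ((j:ℕ)+1) ((i:ℕ)+2) (by omega) (by omega))]
        field_simp
        ring
      · have hij : i = j := Fin.ext (by omega)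
        rw [if_pos hij, show (j:ℕ)+1 = (i:ℕ)+1 by omega, min_self,
          min_eq_left d1.le, min_eq_right d2.le]
        field_simp
        ring
      · have hne : i ≠ j := by rintro rfl; omega
        rw [if_neg hne,
          min_eq_left (hle (i:ℕ) ((j:ℕ)+1) (by omega) (by omega)),
          min_eq_left (hle ((i:ℕ)+1) ((j:ℕ)+1) (by omega) (by omega)),
          min_eq_left (hle ((i:ℕ)+2) ((j:ℕ)+1) (by omega) (by omega))]
        field_simp
        ring

/-- The Gram matrix of the Brownian motion kernel `min` at points
`0 = x₀ < x₁ < ⋯ < x_N` (matrix entries `K i j = min (x (i+1)) (x (j+1))`)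
is invertible, with tridiagonal inverse `B` as stated. -/
theorem stmt3 (N : ℕ) (hN : 0 < N) (x : ℕ → ℝ)
    (hx0 : x 0 = 0)
    (hmono : ∀ i, i < N → x i < x (i + 1))
    (K B : Matrix (Fin N) (Fin N) ℝ)
    (hK : ∀ i j : Fin N, K i j = min (x ((i : ℕ) + 1)) (x ((j : ℕ) + 1)))
    (hB : ∀ i j : Fin N,
      B i j =
        if (i : ℕ) = (j : ℕ) then
          (if (i : ℕ) + 1 = N then 1 / (x N - x (N - 1))
           else (x ((i : ℕ) + 2) - x (i : ℕ)) /
             ((x ((i : ℕ) + 1) - x (i : ℕ)) * (x ((i : ℕ) + 2) - x ((i : ℕ) + 1))))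
        else if (i : ℕ) + 1 = (j : ℕ) then -(1 / (x ((i : ℕ) + 2) - x ((i : ℕ) + 1)))
        else if (j : ℕ) + 1 = (i : ℕ) then -(1 / (x ((j : ℕ) + 2) - x ((j : ℕ) + 1)))
        else 0) :
    K * B = 1 ∧ B * K = 1 := by
  have hBK : B * K = 1 := BK_eq_one N hN x hx0 hmono K B hK hB
  exact ⟨mul_eq_one_comm.mpr hBK, hBK⟩
end

section
/- Let H ∈ (0,1) and let f be a centered Gaussian process on [0,T] with the integrated fractional Brownian motion kernel k_{1,H}. Then for points x_{n−1} < x_n < x_{n+1} with increments Δ₀ = x_n − x_{n−1} and Δ₁ = x_{n+1} − x_n, E[(Δ₀(f(x_{n+1}) − f(x_n)) − Δ₁(f(x_n) − f(x_{n−1})))²] = Δ₁ Δ₀ (Δ₁ + Δ₀) [(Δ₀ + Δ₁)^{2H+1} − Δ₁^{2H+1} − Δ₀^{2H+1}] / (2(H+1)(2H+1)). -/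
open MeasureTheory

lemma aux_int_mul {Ω : Type*} [MeasurableSpace Ω] {ℙ : Measure Ω} {f g : Ω → ℝ}
    (hf : MemLp f 2 ℙ) (hg : MemLp g 2 ℙ) : Integrable (fun ω => f ω * g ω) ℙ := by
  have h := (((hf.add hg).integrable_sq.sub hf.integrable_sq).sub hg.integrable_sq).const_mul
    ((2:ℝ)⁻¹)
  have he : (fun ω => f ω * g ω)
      = fun ω => (2:ℝ)⁻¹ * (((f + g) ω) ^ 2 - f ω ^ 2 - g ω ^ 2) := by
    funext ω; simp only [Pi.add_apply]; ring
  rw [he]; exact h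

lemma aux_rpow_succ {H : ℝ} (hH : 0 < H) {x : ℝ} (hx : 0 ≤ x) :
    x ^ (2 * H + 2) = x * x ^ (2 * H + 1) := by
  rcases eq_or_lt_of_le hx with h | h
  · rw [← h, Real.zero_rpow (by positivity), Real.zero_rpow (by positivity), mul_zero]
  · rw [show (2*H+2 : ℝ) = (2*H+1) + 1 by ring, Real.rpow_add_one h.ne', mul_comm]

/-- For a centered Gaussian process with the integrated fractional Brownian motion
covariance `k_{1,H}`, the stated second-moment identity for the weighted second
difference holds. -/
theorem stmt8 {Ω : Type*} [MeasurableSpace Ω] (ℙ : Measure Ω) [IsProbabilityMeasure ℙ]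
    (T H : ℝ) (hT : 0 < T) (hH : H ∈ Set.Ioo (0 : ℝ) 1)
    (f : ℝ → Ω → ℝ)
    (hL2 : ∀ t ∈ Set.Icc (0 : ℝ) T, MemLp (f t) 2 ℙ)
    (hcen : ∀ t ∈ Set.Icc (0 : ℝ) T, ∫ ω, f t ω ∂ℙ = 0)
    (hcov : ∀ s ∈ Set.Icc (0 : ℝ) T, ∀ t ∈ Set.Icc (0 : ℝ) T,
      ∫ ω, f s ω * f t ω ∂ℙ
        = (1 / (2 * (2 * H + 1))) *
            (t * s ^ (2 * H + 1) + s * t ^ (2 * H + 1)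
              - (1 / (2 * (H + 1))) *
                  (s ^ (2 * H + 2) + t ^ (2 * H + 2) - |s - t| ^ (2 * H + 2)))) :
    ∀ a ∈ Set.Icc (0 : ℝ) T, ∀ b ∈ Set.Icc (0 : ℝ) T, ∀ c ∈ Set.Icc (0 : ℝ) T,
      a < b → b < c →
      ∫ ω, ((b - a) * (f c ω - f b ω) - (c - b) * (f b ω - f a ω)) ^ 2 ∂ℙ
        = (c - b) * (b - a) * ((c - b) + (b - a)) *
            (((b - a) + (c - b)) ^ (2 * H + 1)
              - (c - b) ^ (2 * H + 1) - (b - a) ^ (2 * H + 1))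
          / (2 * (H + 1) * (2 * H + 1)) := by
  intro a ha b hb c hc hab hbc
  obtain ⟨hH0, hH1⟩ := hH
  have ha0 : (0:ℝ) ≤ a := ha.1
  have hb0 : (0:ℝ) ≤ b := hb.1
  have hc0 : (0:ℝ) ≤ c := hc.1
  have j1 : Integrable (fun ω => (b-a)^2 * (f c ω * f c ω)) ℙ :=
    (aux_int_mul (hL2 c hc) (hL2 c hc)).const_mul _
  have j2 : Integrable (fun ω => ((b-a)+(c-b))^2 * (f b ω * f b ω)) ℙ :=
    (aux_int_mul (hL2 b hb) (hL2 b hb)).const_mul _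
  have j3 : Integrable (fun ω => (c-b)^2 * (f a ω * f a ω)) ℙ :=
    (aux_int_mul (hL2 a ha) (hL2 a ha)).const_mul _
  have j4 : Integrable (fun ω => 2*(b-a)*((b-a)+(c-b)) * (f c ω * f b ω)) ℙ :=
    (aux_int_mul (hL2 c hc) (hL2 b hb)).const_mul _
  have j5 : Integrable (fun ω => 2*(b-a)*(c-b) * (f c ω * f a ω)) ℙ :=
    (aux_int_mul (hL2 c hc) (hL2 a ha)).const_mul _
  have j6 : Integrable (fun ω => 2*(c-b)*((b-a)+(c-b)) * (f b ω * f a ω)) ℙ :=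
    (aux_int_mul (hL2 b hb) (hL2 a ha)).const_mul _
  have hpt : ∀ ω, ((b - a) * (f c ω - f b ω) - (c - b) * (f b ω - f a ω)) ^ 2
      = (b-a)^2 * (f c ω * f c ω) + ((b-a)+(c-b))^2 * (f b ω * f b ω)
        + (c-b)^2 * (f a ω * f a ω)
        - 2*(b-a)*((b-a)+(c-b)) * (f c ω * f b ω)
        + 2*(b-a)*(c-b) * (f c ω * f a ω)
        - 2*(c-b)*((b-a)+(c-b)) * (f b ω * f a ω) := by
    intro ω; ring
  calc ∫ ω, ((b - a) * (f c ω - f b ω) - (c - b) * (f b ω - f a ω)) ^ 2 ∂ℙ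
      = ∫ ω, ((b-a)^2 * (f c ω * f c ω) + ((b-a)+(c-b))^2 * (f b ω * f b ω)
        + (c-b)^2 * (f a ω * f a ω)
        - 2*(b-a)*((b-a)+(c-b)) * (f c ω * f b ω)
        + 2*(b-a)*(c-b) * (f c ω * f a ω)
        - 2*(c-b)*((b-a)+(c-b)) * (f b ω * f a ω)) ∂ℙ := by
        exact integral_congr_ae (Filter.Eventually.of_forall hpt)
    _ = (b-a)^2 * (∫ ω, f c ω * f c ω ∂ℙ)
        + ((b-a)+(c-b))^2 * (∫ ω, f b ω * f b ω ∂ℙ)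
        + (c-b)^2 * (∫ ω, f a ω * f a ω ∂ℙ)
        - 2*(b-a)*((b-a)+(c-b)) * (∫ ω, f c ω * f b ω ∂ℙ)
        + 2*(b-a)*(c-b) * (∫ ω, f c ω * f a ω ∂ℙ)
        - 2*(c-b)*((b-a)+(c-b)) * (∫ ω, f b ω * f a ω ∂ℙ) := by
        have k1 : Integrable (fun ω => (b-a)^2 * (f c ω * f c ω)
            + ((b-a)+(c-b))^2 * (f b ω * f b ω)) ℙ := j1.add j2
        have k2 : Integrable (fun ω => (b-a)^2 * (f c ω * f c ω)
            + ((b-a)+(c-b))^2 * (f b ω * f b ω)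
            + (c-b)^2 * (f a ω * f a ω)) ℙ := k1.add j3
        have k3 : Integrable (fun ω => (b-a)^2 * (f c ω * f c ω)
            + ((b-a)+(c-b))^2 * (f b ω * f b ω)
            + (c-b)^2 * (f a ω * f a ω)
            - 2*(b-a)*((b-a)+(c-b)) * (f c ω * f b ω)) ℙ := k2.sub j4
        have k4 : Integrable (fun ω => (b-a)^2 * (f c ω * f c ω)
            + ((b-a)+(c-b))^2 * (f b ω * f b ω)
            + (c-b)^2 * (f a ω * f a ω)
            - 2*(b-a)*((b-a)+(c-b)) * (f c ω * f b ω)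
            + 2*(b-a)*(c-b) * (f c ω * f a ω)) ℙ := k3.add j5
        rw [integral_sub k4 j6, integral_add k3 j5, integral_sub k2 j4,
          integral_add k1 j3, integral_add j1 j2,
          integral_const_mul, integral_const_mul, integral_const_mul,
          integral_const_mul, integral_const_mul, integral_const_mul]
    _ = (c - b) * (b - a) * ((c - b) + (b - a)) *
            (((b - a) + (c - b)) ^ (2 * H + 1)
              - (c - b) ^ (2 * H + 1) - (b - a) ^ (2 * H + 1))
          / (2 * (H + 1) * (2 * H + 1)) := by
        rw [hcov c hc c hc, hcov b hb b hb, hcov a ha a ha, hcov c hc b hb,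
          hcov c hc a ha, hcov b hb a ha]
        rw [show c - c = (0:ℝ) by ring, show b - b = (0:ℝ) by ring,
          show a - a = (0:ℝ) by ring, abs_zero,
          Real.zero_rpow (by positivity : (2*H+2:ℝ) ≠ 0),
          abs_of_pos (by linarith : (0:ℝ) < c - b),
          abs_of_pos (by linarith : (0:ℝ) < c - a),
          abs_of_pos (by linarith : (0:ℝ) < b - a)]
        rw [aux_rpow_succ hH0 ha0, aux_rpow_succ hH0 hb0, aux_rpow_succ hH0 hc0,
          aux_rpow_succ hH0 (by linarith : (0:ℝ) ≤ c - b),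
          aux_rpow_succ hH0 (by linarith : (0:ℝ) ≤ c - a),
          aux_rpow_succ hH0 (by linarith : (0:ℝ) ≤ b - a),
          show c - a = (b - a) + (c - b) by ring]
        have h1 : (2*H+1 : ℝ) ≠ 0 := by positivity
        have h2 : (H+1 : ℝ) ≠ 0 := by positivity
        field_simp
        ring
end
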